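/- In the or-composition instance, where each book has all its available prices equal to T+1, each shop s of degree k has threshold k(T+1) and discount k, and the budget is T·n' with n' the total number of books: a purchase plan has cost at most T·n' if and only if the set of chosen shops S' is such that the books sold by shops of S' partition the book set B (each book is sold by exactly one shop of S', and every book at a shop in S' is bought there). -/
import Mathlib


/-- Or-composition pricing gadget: all prices are `T + 1`, a shop of degree
`k` has threshold `k (T + 1)` and discount `k`, and the budget is `T · |B|`.
A purchase plan `g` has cost at most `T · |B|` iff, taking `S'` to be the set
of shops at which something is bought, the books sold by the shops of `S'`
partition `B`: every book is sold by exactly one shop of `S'`, and every book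
sold by a shop of `S'` is bought there. -/
theorem stmt_15 {B S : Type*} [Fintype B] [Fintype S] [DecidableEq B] [DecidableEq S]
    (Avail : B → S → Bool) (T : ℕ)
    (g : B → S) (hg : ∀ b, Avail b (g b) = true) :
    let deg : S → ℕ := fun s => (Finset.univ.filter (fun b => Avail b s = true)).card
    let cnt : S → ℕ := fun s => (Finset.univ.filter (fun b => g b = s)).card
    let S' : Finset S := Finset.univ.filter (fun s => ∃ b, g b = s)
    ((((T : ℤ) + 1) * (Fintype.card B : ℤ) -
        ∑ s ∈ Finset.univ.filter (fun s => deg s * (T + 1) ≤ cnt s * (T + 1)), (deg s : ℤ))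
      ≤ (T : ℤ) * (Fintype.card B : ℤ)) ↔
      ((∀ b, ∃! s, s ∈ S' ∧ Avail b s = true) ∧
        ∀ s ∈ S', ∀ b, Avail b s = true → g b = s) := by
  intro deg cnt S'
  have hsub : ∀ s, Finset.univ.filter (fun b => g b = s) ⊆
      Finset.univ.filter (fun b => Avail b s = true) := by
    intro s b hb
    simp only [Finset.mem_filter, Finset.mem_univ, true_and] at *
    exact hb ▸ hg b
  have hdegcnt : ∀ s, cnt s ≤ deg s := fun s => Finset.card_le_card (hsub s)
  have hsum : ∑ s, cnt s = Fintype.card B := by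
    rw [← Finset.card_univ,
      Finset.card_eq_sum_card_fiberwise (f := g) (t := Finset.univ)
        (fun b _ => Finset.mem_univ _)]
  have hset : ∀ s, deg s ≤ cnt s →
      Finset.univ.filter (fun b => Avail b s = true) = Finset.univ.filter (fun b => g b = s) :=
    fun s h => (Finset.eq_of_subset_of_card_le (hsub s) h).symm
  set F := Finset.univ.filter (fun s => deg s * (T + 1) ≤ cnt s * (T + 1)) with hF
  have hmemF : ∀ s, s ∈ F ↔ deg s ≤ cnt s := by
    intro s
    simp only [hF, Finset.mem_filter, Finset.mem_univ, true_and]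
    constructor
    · intro h; exact Nat.le_of_mul_le_mul_right h (Nat.succ_pos T)
    · intro h; exact Nat.mul_le_mul_right _ h
  have hFsum : ∑ s ∈ F, deg s = ∑ s ∈ F, cnt s :=
    Finset.sum_congr rfl (fun s hs => le_antisymm ((hmemF s).1 hs) (hdegcnt s))
  have hsplit : ∑ s ∈ F, cnt s + ∑ s ∈ Fᶜ, cnt s = Fintype.card B := by
    rw [Finset.sum_add_sum_compl]; exact hsum
  have hcntpos : ∀ s, (∃ b, g b = s) ↔ 0 < cnt s := by
    intro s
    rw [Finset.card_pos]
    constructor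
    · rintro ⟨b, hb⟩
      exact ⟨b, by simp [hb]⟩
    · rintro ⟨b, hb⟩
      simp only [Finset.mem_filter] at hb
      exact ⟨b, hb.2⟩
  have key : ((((T : ℤ) + 1) * (Fintype.card B : ℤ) - ∑ s ∈ F, (deg s : ℤ))
      ≤ (T : ℤ) * (Fintype.card B : ℤ)) ↔ (∀ s, (∃ b, g b = s) → deg s ≤ cnt s) := by
    have hcast : (∑ s ∈ F, (deg s : ℤ)) = ((∑ s ∈ F, deg s : ℕ) : ℤ) := by push_cast; ring
    constructor
    · intro h s hs
      have h1 : (Fintype.card B : ℤ) ≤ ((∑ s ∈ F, deg s : ℕ) : ℤ) := by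
        rw [← hcast]; linarith
      have h2 : Fintype.card B ≤ ∑ s ∈ F, deg s := by exact_mod_cast h1
      have h3 : ∑ s ∈ Fᶜ, cnt s = 0 := by omega
      by_contra hc
      have hsF : s ∉ F := fun hsF => hc ((hmemF s).1 hsF)
      have : cnt s = 0 := Finset.sum_eq_zero_iff.1 h3 s (Finset.mem_compl.2 hsF)
      have := (hcntpos s).1 hs
      omega
    · intro h
      have h0 : ∑ s ∈ Fᶜ, cnt s = 0 := by
        apply Finset.sum_eq_zero
        intro s hs
        rw [Finset.mem_compl] at hs
        by_contra hc
        exact hs ((hmemF s).2 (h s ((hcntpos s).2 (Nat.pos_of_ne_zero hc))))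
      have h2 : Fintype.card B ≤ ∑ s ∈ F, deg s := by omega
      have : (Fintype.card B : ℤ) ≤ ∑ s ∈ F, (deg s : ℤ) := by
        rw [hcast]; exact_mod_cast h2
      linarith
  rw [key]
  constructor
  · intro h
    have heq : ∀ s ∈ S', Finset.univ.filter (fun b => Avail b s = true) =
        Finset.univ.filter (fun b => g b = s) := by
      intro s hs
      simp only [S', Finset.mem_filter, Finset.mem_univ, true_and] at hs
      exact hset s (h s hs)
    have hall : ∀ s ∈ S', ∀ b, Avail b s = true → g b = s := by
      intro s hs b hA
      have hb : b ∈ Finset.univ.filter (fun b => g b = s) := by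
        rw [← heq s hs]; simp [hA]
      simpa using hb
    refine ⟨fun b => ⟨g b, ⟨?_, hg b⟩, ?_⟩, hall⟩
    · simp only [S', Finset.mem_filter, Finset.mem_univ, true_and]
      exact ⟨b, rfl⟩
    · rintro s ⟨hs, hA⟩
      exact (hall s hs b hA).symm
  · rintro ⟨h1, h2⟩ s hs
    have hsS' : s ∈ S' := by
      simp only [S', Finset.mem_filter, Finset.mem_univ, true_and]; exact hs
    apply Finset.card_le_card
    intro b hb
    simp only [Finset.mem_filter, Finset.mem_univ, true_and] at *
    exact h2 s hsS' b hb
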